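/- Let f : ℝ³ → ℝ be nowhere zero and a : ℝ³ → ℝ arbitrary. Define on ℝ³ × ℝ³ (coordinates (q₁,q₂,q₃,p₁,p₂,p₃)) the matrix Ω(q,p) = [[0, −(1/f(p))·I₃],[(1/f(p))·I₃, (1/f(p)²)·L]] in 3×3 blocks with L_{ij} = a(p)·ε_{ijk}·J_k and J_k = (1/f(p))·ε_{klm} q_l p_m, and let Φ : (0,∞) × ℝ × [0,π] × [0,2π) → ℝ⁶ be the parametrization Φ(r,ρ,θ,φ) = (r·sinθ·cosφ, r·sinθ·sinφ, r·cosθ, ρ·sinθ·cosφ, ρ·sinθ·sinφ, ρ·cosθ) of the constraint surface q × p = 0. Then for every (r,ρ,θ,φ) and all u, v ∈ ℝ⁴ (components ordered (u_r, u_ρ, u_θ, u_φ)): (DΦ·u)ᵀ · Ω(Φ) · (DΦ·v) = (1/f(Φ_p)) · (u_ρ·v_r − u_r·v_ρ), where Φ_p = (ρ·sinθ·cosφ, ρ·sinθ·sinφ, ρ·cosθ). That is, the pullback of the deformed symplectic form to the constraint surface equals (1/f(ρ)) dρ ∧ dr, and hence the reduced symplectic form on M ⫽ SO(3) in the natural coordinates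 (r,ρ) is ω̃ = (1/f(ρ)) dρ ∧ dr. -/

import Mathlib

open Matrix

/-- Deformed angular momentum vector `J_k(q,p) = (1/f(p))·ε_{klm} q_l p_m` on the phase space
`ℝ⁶` with coordinates `(q₁,q₂,q₃,p₁,p₂,p₃)`. -/
noncomputable def J3fun (f : (Fin 3 → ℝ) → ℝ) (x : Fin 6 → ℝ) : Fin 3 → ℝ :=
  (f ![x 3, x 4, x 5])⁻¹ • crossProduct ![x 0, x 1, x 2] ![x 3, x 4, x 5]

/-- Matrix of the deformed symplectic form of the three-dimensional rotationally invariant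
(Maggiore-type) GUP theory: block form `[[0, −(1/f)·I₃],[(1/f)·I₃, (1/f²)·L]]` with
`L_{ij} = a(p)·ε_{ijk}·J_k`. -/
noncomputable def Omega3 (f a : (Fin 3 → ℝ) → ℝ) (x : Fin 6 → ℝ) : Matrix (Fin 6) (Fin 6) ℝ :=
  let p : Fin 3 → ℝ := ![x 3, x 4, x 5]
  let J : Fin 3 → ℝ := J3fun f x
  let g : ℝ := (f p)⁻¹
  let b : ℝ := a p / (f p) ^ 2
  !![0, 0, 0, -g, 0, 0;
     0, 0, 0, 0, -g, 0;
     0, 0, 0, 0, 0, -g;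
     g, 0, 0, 0, b * J 2, -(b * J 1);
     0, g, 0, -(b * J 2), 0, b * J 0;
     0, 0, g, b * J 1, -(b * J 0), 0]

/-- Spherical parametrization
`Φ(r,ρ,θ,φ) = (r·sinθ·cosφ, r·sinθ·sinφ, r·cosθ, ρ·sinθ·cosφ, ρ·sinθ·sinφ, ρ·cosθ)` of the
constraint surface `q × p = 0`. -/
noncomputable def Phi3 (y : Fin 4 → ℝ) : Fin 6 → ℝ :=
  ![y 0 * Real.sin (y 2) * Real.cos (y 3), y 0 * Real.sin (y 2) * Real.sin (y 3),
    y 0 * Real.cos (y 2),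
    y 1 * Real.sin (y 2) * Real.cos (y 3), y 1 * Real.sin (y 2) * Real.sin (y 3),
    y 1 * Real.cos (y 2)]

lemma cons_val_five' {α : Type*} (a0 a1 a2 a3 a4 a5 : α) : ![a0,a1,a2,a3,a4,a5] 5 = a5 := rfl

lemma cons_val_five'' {α : Type*} (a : α) (u : Fin 5 → α) : Matrix.vecCons a u 5 = u 4 := rfl

lemma fd_sc (i : Fin 4) (y u : Fin 4 → ℝ) :
    fderiv ℝ (fun y : Fin 4 → ℝ => y i * Real.sin (y 2) * Real.cos (y 3)) y u =
      u i * Real.sin (y 2) * Real.cos (y 3) + y i * Real.cos (y 2) * u 2 * Real.cos (y 3)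
        - y i * Real.sin (y 2) * Real.sin (y 3) * u 3 := by
  have h := (((hasFDerivAt_apply i y).mul ((hasFDerivAt_apply 2 y).sin)).mul
    ((hasFDerivAt_apply 3 y).cos))
  rw [HasFDerivAt.fderiv (f := (fun y : Fin 4 → ℝ => y i * Real.sin (y 2) * Real.cos (y 3))) h]; simp; ring

lemma fd_ss (i : Fin 4) (y u : Fin 4 → ℝ) :
    fderiv ℝ (fun y : Fin 4 → ℝ => y i * Real.sin (y 2) * Real.sin (y 3)) y u =
      u i * Real.sin (y 2) * Real.sin (y 3) + y i * Real.cos (y 2) * u 2 * Real.sin (y 3)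
        + y i * Real.sin (y 2) * Real.cos (y 3) * u 3 := by
  have h := (((hasFDerivAt_apply i y).mul ((hasFDerivAt_apply 2 y).sin)).mul
    ((hasFDerivAt_apply 3 y).sin))
  rw [HasFDerivAt.fderiv (f := (fun y : Fin 4 → ℝ => y i * Real.sin (y 2) * Real.sin (y 3))) h]; simp; ring

lemma fd_c (i : Fin 4) (y u : Fin 4 → ℝ) :
    fderiv ℝ (fun y : Fin 4 → ℝ => y i * Real.cos (y 2)) y u =
      u i * Real.cos (y 2) - y i * Real.sin (y 2) * u 2 := by
  have h := ((hasFDerivAt_apply i y).mul ((hasFDerivAt_apply 2 y).cos))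
  rw [HasFDerivAt.fderiv (f := (fun y : Fin 4 → ℝ => y i * Real.cos (y 2))) h]; simp; ring

lemma fderiv_Phi3_apply (y u : Fin 4 → ℝ) :
    fderiv ℝ Phi3 y u =
      ![u 0 * Real.sin (y 2) * Real.cos (y 3) + y 0 * Real.cos (y 2) * u 2 * Real.cos (y 3)
          - y 0 * Real.sin (y 2) * Real.sin (y 3) * u 3,
        u 0 * Real.sin (y 2) * Real.sin (y 3) + y 0 * Real.cos (y 2) * u 2 * Real.sin (y 3)
          + y 0 * Real.sin (y 2) * Real.cos (y 3) * u 3,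
        u 0 * Real.cos (y 2) - y 0 * Real.sin (y 2) * u 2,
        u 1 * Real.sin (y 2) * Real.cos (y 3) + y 1 * Real.cos (y 2) * u 2 * Real.cos (y 3)
          - y 1 * Real.sin (y 2) * Real.sin (y 3) * u 3,
        u 1 * Real.sin (y 2) * Real.sin (y 3) + y 1 * Real.cos (y 2) * u 2 * Real.sin (y 3)
          + y 1 * Real.sin (y 2) * Real.cos (y 3) * u 3,
        u 1 * Real.cos (y 2) - y 1 * Real.sin (y 2) * u 2] := by
  have hdiff : ∀ i : Fin 6, DifferentiableAt ℝ (fun y => Phi3 y i) y := by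
    intro i; fin_cases i
    · show DifferentiableAt ℝ (fun y : Fin 4 → ℝ => y 0 * Real.sin (y 2) * Real.cos (y 3)) y
      fun_prop
    · show DifferentiableAt ℝ (fun y : Fin 4 → ℝ => y 0 * Real.sin (y 2) * Real.sin (y 3)) y
      fun_prop
    · show DifferentiableAt ℝ (fun y : Fin 4 → ℝ => y 0 * Real.cos (y 2)) y
      fun_prop
    · show DifferentiableAt ℝ (fun y : Fin 4 → ℝ => y 1 * Real.sin (y 2) * Real.cos (y 3)) y
      fun_prop
    · show DifferentiableAt ℝ (fun y : Fin 4 → ℝ => y 1 * Real.sin (y 2) * Real.sin (y 3)) y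
      fun_prop
    · show DifferentiableAt ℝ (fun y : Fin 4 → ℝ => y 1 * Real.cos (y 2)) y
      fun_prop
  have h : fderiv ℝ Phi3 y = ContinuousLinearMap.pi fun i => fderiv ℝ (fun y => Phi3 y i) y :=
    fderiv_pi hdiff
  rw [h]
  funext i
  fin_cases i
  · exact fd_sc 0 y u
  · exact fd_ss 0 y u
  · exact fd_c 0 y u
  · exact fd_sc 1 y u
  · exact fd_ss 1 y u
  · exact fd_c 1 y u

lemma J3fun_Phi3 (f : (Fin 3 → ℝ) → ℝ) (y : Fin 4 → ℝ) : J3fun f (Phi3 y) = 0 := by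
  funext k
  fin_cases k <;> simp [J3fun, Phi3, cross_apply, cons_val_five'] <;> right <;> ring

set_option maxHeartbeats 1000000 in
/-- The pullback of the deformed symplectic form of the three-dimensional rotationally
invariant GUP theory to the constraint surface equals `(1/f(ρ)) dρ ∧ dr`: for all tangent
vectors `u, v`, `(DΦ·u)ᵀ·Ω(Φ)·(DΦ·v) = (1/f(Φ_p))·(u_ρ·v_r − u_r·v_ρ)`. Hence the reduced
symplectic form on `M ⫽ SO(3)` in the natural coordinates `(r,ρ)` is `ω̃ = (1/f(ρ)) dρ∧dr`. -/
theorem stmt_15 (f a : (Fin 3 → ℝ) → ℝ) (hf0 : ∀ p, f p ≠ 0) :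
    ∀ y : Fin 4 → ℝ, 0 < y 0 → y 2 ∈ Set.Icc 0 Real.pi →
      y 3 ∈ Set.Ico 0 (2 * Real.pi) → ∀ u v : Fin 4 → ℝ,
      (fderiv ℝ Phi3 y u) ⬝ᵥ (Omega3 f a (Phi3 y)).mulVec (fderiv ℝ Phi3 y v) =
        (1 / f ![y 1 * Real.sin (y 2) * Real.cos (y 3),
                 y 1 * Real.sin (y 2) * Real.sin (y 3),
                 y 1 * Real.cos (y 2)]) * (u 1 * v 0 - u 0 * v 1) := by
  intro y hy0 hy2 hy3 u v
  have hJ := J3fun_Phi3 f y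
  set s2 := Real.sin (y 2); set c2 := Real.cos (y 2)
  set s3 := Real.sin (y 3); set c3 := Real.cos (y 3)
  have hp : (![Phi3 y 3, Phi3 y 4, Phi3 y 5] : Fin 3 → ℝ)
      = ![y 1 * s2 * c3, y 1 * s2 * s3, y 1 * c2] := by
    funext k; fin_cases k <;> simp [Phi3, cons_val_five', s2, c2, s3, c3]
  rw [fderiv_Phi3_apply y u, fderiv_Phi3_apply y v]
  simp only [Omega3, hJ, hp, Pi.zero_apply, mul_zero, neg_zero]
  rw [dotProduct, Fin.sum_univ_six]
  simp only [Matrix.mulVec, dotProduct, Fin.sum_univ_six, Matrix.cons_val_zero,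
    Matrix.cons_val_one, Matrix.head_cons, Matrix.cons_val_two, Matrix.tail_cons,
    Matrix.cons_val_three, Matrix.cons_val_four, cons_val_five', cons_val_five'',
    Matrix.of_apply, Matrix.cons_val', Matrix.empty_val', Matrix.cons_val_fin_one,
    Matrix.head_fin_const]
  have h2 : s2 ^ 2 + c2 ^ 2 = 1 := Real.sin_sq_add_cos_sq (y 2)
  have h3 : s3 ^ 2 + c3 ^ 2 = 1 := Real.sin_sq_add_cos_sq (y 3)
  set F := f ![y 1 * s2 * c3, y 1 * s2 * s3, y 1 * c2] with hF
  linear_combination (F⁻¹ * (u 1 * v 0 - u 0 * v 1)) * h2 +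
    (F⁻¹ * ((u 1 * v 0 - u 0 * v 1) * s2 ^ 2 +
      s2 * c2 * (u 1 * y 0 * v 2 + y 1 * u 2 * v 0 - u 0 * y 1 * v 2 - y 0 * u 2 * v 1))) * h3
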